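/- Let α > 0, α ≠ 1. There exists a constant A > 0, depending only on p and α, such that for every integer m ≥ 0 there is a constant d_{α,m} with 0 ≤ d_{α,m} ≤ A p^{-αm} such that for every x ∈ ℚ_p, x ≠ 0, one has ∫_{‖y‖ < ‖x‖} | ‖x‖^{α-1} - ‖y‖^{α-1} | · ‖y‖^{αm} dμ(y) = d_{α,m} ‖x‖^{α(m+1)}; explicitly, d_{α,m} = (1 - p^{-1}) · | p^{-αm-1}/(1 - p^{-αm-1}) - p^{-α(m+1)}/(1 - p^{-α(m+1)}) |. -/

import Mathlib

open MeasureTheory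

lemma geom_succ_tsum {r : ℝ} (h0 : 0 ≤ r) (h1 : r < 1) :
    ∑' k : ℕ, r ^ (k + 1) = r / (1 - r) := by
  have := tsum_geometric_of_lt_one h0 h1
  calc ∑' k : ℕ, r ^ (k + 1) = ∑' k : ℕ, r * r ^ k := by
        simp [pow_succ, mul_comm]
    _ = r * ∑' k : ℕ, r ^ k := by rw [tsum_mul_left]
    _ = r / (1 - r) := by rw [this, div_eq_mul_inv]

lemma geom_succ_summable {r : ℝ} (h0 : 0 ≤ r) (h1 : r < 1) :
    Summable (fun k : ℕ => r ^ (k + 1)) := by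
  have := summable_geometric_of_lt_one h0 h1
  simpa [pow_succ, mul_comm] using this.mul_left r

lemma geom_abs_tsum_le {r₁ r₂ : ℝ} (h10 : 0 ≤ r₁) (h11 : r₁ < 1)
    (h20 : 0 ≤ r₂) (h21 : r₂ < 1) (hle : r₁ ≤ r₂) :
    ∑' k : ℕ, |r₁ ^ (k + 1) - r₂ ^ (k + 1)| = |r₁ / (1 - r₁) - r₂ / (1 - r₂)| := by
  have habs : ∀ k : ℕ, |r₁ ^ (k + 1) - r₂ ^ (k + 1)| = r₂ ^ (k + 1) - r₁ ^ (k + 1) := by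
    intro k
    rw [abs_sub_comm, abs_of_nonneg (sub_nonneg.2 (pow_le_pow_left₀ h10 hle _))]
  have hD : r₁ / (1 - r₁) ≤ r₂ / (1 - r₂) := by
    apply div_le_div₀ h20 hle (by linarith) (by linarith)
  rw [abs_sub_comm, abs_of_nonneg (sub_nonneg.2 hD)]
  calc ∑' k : ℕ, |r₁ ^ (k + 1) - r₂ ^ (k + 1)|
      = ∑' k : ℕ, (r₂ ^ (k + 1) - r₁ ^ (k + 1)) := by simp only [habs]
    _ = (∑' k : ℕ, r₂ ^ (k + 1)) - ∑' k : ℕ, r₁ ^ (k + 1) :=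
        Summable.tsum_sub (geom_succ_summable h20 h21) (geom_succ_summable h10 h11)
    _ = r₂ / (1 - r₂) - r₁ / (1 - r₁) := by
        rw [geom_succ_tsum h10 h11, geom_succ_tsum h20 h21]

lemma geom_abs_tsum {r₁ r₂ : ℝ} (h10 : 0 ≤ r₁) (h11 : r₁ < 1)
    (h20 : 0 ≤ r₂) (h21 : r₂ < 1) :
    ∑' k : ℕ, |r₁ ^ (k + 1) - r₂ ^ (k + 1)| = |r₁ / (1 - r₁) - r₂ / (1 - r₂)| := by
  rcases le_total r₁ r₂ with h | h
  · exact geom_abs_tsum_le h10 h11 h20 h21 h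
  · simp only [abs_sub_comm (r₁ ^ _), abs_sub_comm (r₁ / _)]
    exact geom_abs_tsum_le h20 h21 h10 h11 h

lemma geom_abs_summable {r₁ r₂ : ℝ} (h10 : 0 ≤ r₁) (h11 : r₁ < 1)
    (h20 : 0 ≤ r₂) (h21 : r₂ < 1) :
    Summable (fun k : ℕ => |r₁ ^ (k + 1) - r₂ ^ (k + 1)|) := by
  apply Summable.of_nonneg_of_le (fun k => abs_nonneg _)
    (fun k => (abs_sub _ _).trans ?_)
    ((geom_succ_summable h10 h11).add (geom_succ_summable h20 h21))
  rw [abs_of_nonneg (pow_nonneg h10 _), abs_of_nonneg (pow_nonneg h20 _)]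
 
lemma term_eq {P : ℝ} (hP : 1 < P) (α : ℝ) (m k : ℕ) (u : ℝ) :
    |(P ^ u) ^ (α - 1) - (P ^ (u - 1 - (k:ℝ))) ^ (α - 1)| * (P ^ (u - 1 - (k:ℝ))) ^ (α * m)
      * (P ^ (u - 1 - (k:ℝ)) - P ^ (u - 2 - (k:ℝ)))
    = ((1 - P⁻¹) * (P ^ u) ^ (α * (m + 1)))
      * |(P ^ (-α * m - 1)) ^ (k + 1) - (P ^ (-α * (m + 1))) ^ (k + 1)| := by
  have hp0 : (0:ℝ) < P := lt_trans one_pos hP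
  have hrw : ∀ s : ℝ, (P ^ s) ^ (k + 1) = P ^ (s * ((k:ℝ) + 1)) := by
    intro s
    rw [← Real.rpow_natCast (P ^ s) (k + 1), ← Real.rpow_mul hp0.le]
    norm_num
  rw [hrw, hrw, ← Real.rpow_mul hp0.le, ← Real.rpow_mul hp0.le, ← Real.rpow_mul hp0.le, ← Real.rpow_mul hp0.le]
  have hd : (0:ℝ) ≤ P ^ ((u - 1 - (k:ℝ)) * (α * m)) * (P ^ (u - 1 - (k:ℝ)) - P ^ (u - 2 - (k:ℝ))) := by
    apply mul_nonneg (Real.rpow_nonneg hp0.le _)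
    rw [sub_nonneg]
    exact Real.rpow_le_rpow_of_exponent_le hP.le (by linarith)
  have hKnn : (0:ℝ) ≤ (1 - P⁻¹) * P ^ (u * (α * (m + 1))) := by
    apply mul_nonneg _ (Real.rpow_nonneg hp0.le _)
    rw [sub_nonneg, inv_le_one_iff₀]; right; exact hP.le
  rw [mul_assoc, ← abs_of_nonneg hd, ← abs_mul, ← abs_of_nonneg hKnn, ← abs_mul]
  congr 1
  simp only [mul_sub, sub_mul, one_mul, ← Real.rpow_neg_one P, ← Real.rpow_add hp0]
  ring_nf

section
variable (p : ℕ) [Fact p.Prime]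
    [MeasurableSpace ℚ_[p]] [BorelSpace ℚ_[p]]
    (μ : Measure ℚ_[p]) [μ.IsAddHaarMeasure]

lemma ball_meas (n : ℤ) : MeasurableSet {y : ℚ_[p] | ‖y‖ ≤ (p : ℝ) ^ n} :=
  (isClosed_le (continuous_norm) continuous_const).measurableSet

lemma ball_succ_eq (n : ℤ) :
    {y : ℚ_[p] | ‖y‖ ≤ (p : ℝ) ^ (n + 1)} =
      ⋃ i : Fin p, (fun y => y + -((i : ℚ_[p]) * (p : ℚ_[p]) ^ (-(n + 1)))) ⁻¹'
        {y : ℚ_[p] | ‖y‖ ≤ (p : ℝ) ^ n} := by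
  have hp1 : 1 < (p : ℝ) := by exact_mod_cast (Fact.out : p.Prime).one_lt
  have hpR : (p : ℝ) ≠ 0 := by positivity
  have hp0 : (p : ℚ_[p]) ≠ 0 := by
    exact_mod_cast (Nat.cast_ne_zero (R := ℚ_[p])).2 (Fact.out : p.Prime).ne_zero
  ext y
  simp only [Set.mem_iUnion, Set.mem_preimage, Set.mem_setOf_eq]
  constructor
  · intro hy
    set z : ℚ_[p] := y * (p : ℚ_[p]) ^ (n + 1) with hz
    have hznorm : ‖z‖ ≤ 1 := by
      rw [hz, norm_mul, Padic.norm_p_zpow]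
      calc ‖y‖ * (p : ℝ) ^ (-(n + 1)) ≤ (p : ℝ) ^ (n + 1) * (p : ℝ) ^ (-(n + 1)) := by
            apply mul_le_mul_of_nonneg_right hy (zpow_nonneg (by positivity) _)
        _ = 1 := by rw [← zpow_add₀ hpR, show n + 1 + -(n+1) = 0 from by ring, zpow_zero]
    set zz : ℤ_[p] := ⟨z, hznorm⟩ with hzz
    have hlt : zz.appr 1 < p := by simpa using zz.appr_lt 1
    refine ⟨⟨zz.appr 1, hlt⟩, ?_⟩
    have hspec := zz.appr_spec 1
    rw [pow_one] at hspec
    have hnorm1 : ‖zz - (zz.appr 1 : ℤ_[p])‖ ≤ (p : ℝ) ^ (-(1:ℤ)) := by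
      rw [show (-(1:ℤ)) = -((1:ℕ):ℤ) from by norm_num,
        PadicInt.norm_le_pow_iff_mem_span_pow]
      simpa using hspec
    have hzy : y = z * (p : ℚ_[p]) ^ (-(n + 1)) := by
      rw [hz, mul_assoc, ← zpow_add₀ hp0, show n + 1 + -(n+1) = 0 from by ring,
        zpow_zero, mul_one]
    have key : y + -((zz.appr 1 : ℚ_[p]) * (p : ℚ_[p]) ^ (-(n + 1)))
        = (z - (zz.appr 1 : ℚ_[p])) * (p : ℚ_[p]) ^ (-(n + 1)) := by
      rw [hzy]; ring
    rw [key, norm_mul, Padic.norm_p_zpow, neg_neg]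
    have hc : ‖z - ((zz.appr 1 : ℕ) : ℚ_[p])‖ ≤ (p : ℝ) ^ (-(1:ℤ)) := by
      have heq : ((zz - (zz.appr 1 : ℤ_[p]) : ℤ_[p]) : ℚ_[p]) = z - ((zz.appr 1 : ℕ) : ℚ_[p]) := by
        rw [PadicInt.coe_sub, PadicInt.coe_natCast]
      rw [← heq]
      simpa [PadicInt.norm_def] using hnorm1
    calc ‖z - ((zz.appr 1 : ℕ) : ℚ_[p])‖ * (p : ℝ) ^ (n + 1)
        ≤ (p : ℝ) ^ (-(1:ℤ)) * (p : ℝ) ^ (n + 1) :=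
          mul_le_mul_of_nonneg_right hc (zpow_nonneg (by positivity) _)
      _ = (p : ℝ) ^ n := by
          rw [← zpow_add₀ hpR, show -(1:ℤ) + (n + 1) = n from by ring]
  · rintro ⟨i, hi⟩
    have h1a : ‖(i : ℚ_[p])‖ ≤ 1 := by
      have h := Padic.norm_int_le_one (p := p) ((i : ℕ) : ℤ)
      rwa [show (((i : ℕ) : ℤ) : ℚ_[p]) = (i : ℚ_[p]) from by push_cast; ring] at h
    have h1 : ‖(i : ℚ_[p]) * (p : ℚ_[p]) ^ (-(n + 1))‖ ≤ (p : ℝ) ^ (n + 1) := by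
      rw [norm_mul, Padic.norm_p_zpow, neg_neg]
      calc ‖(i : ℚ_[p])‖ * (p : ℝ) ^ (n + 1) ≤ 1 * (p : ℝ) ^ (n + 1) :=
            mul_le_mul_of_nonneg_right h1a (by positivity)
        _ = (p : ℝ) ^ (n + 1) := one_mul _
    have h2 : ‖y + -((i : ℚ_[p]) * (p : ℚ_[p]) ^ (-(n + 1)))‖ ≤ (p : ℝ) ^ (n + 1) :=
      le_trans hi (zpow_le_zpow_right₀ (le_of_lt hp1) (by omega))
    calc ‖y‖ = ‖(y + -((i : ℚ_[p]) * (p : ℚ_[p]) ^ (-(n + 1)))) +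
          ((i : ℚ_[p]) * (p : ℚ_[p]) ^ (-(n + 1)))‖ := by ring_nf
      _ ≤ max ‖y + -((i : ℚ_[p]) * (p : ℚ_[p]) ^ (-(n + 1)))‖
            ‖(i : ℚ_[p]) * (p : ℚ_[p]) ^ (-(n + 1))‖ := Padic.nonarchimedean _ _
      _ ≤ (p : ℝ) ^ (n + 1) := max_le h2 h1

set_option linter.unusedSectionVars false

lemma ball_succ_disj (n : ℤ) :
    Pairwise (Function.onFun Disjoint (fun i : Fin p =>
      (fun y => y + -((i : ℚ_[p]) * (p : ℚ_[p]) ^ (-(n + 1)))) ⁻¹'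
        {y : ℚ_[p] | ‖y‖ ≤ (p : ℝ) ^ n})) := by
  have hp1 : 1 < (p : ℝ) := by exact_mod_cast (Fact.out : p.Prime).one_lt
  intro i j hij
  rw [Function.onFun, Set.disjoint_left]
  intro y hi hj
  simp only [Set.mem_preimage, Set.mem_setOf_eq] at hi hj
  apply hij
  have hd : ‖((i : ℚ_[p]) - (j : ℚ_[p])) * (p : ℚ_[p]) ^ (-(n + 1))‖ ≤ (p : ℝ) ^ n := by
    have heq2 : ((i : ℚ_[p]) - (j : ℚ_[p])) * (p : ℚ_[p]) ^ (-(n + 1))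
        = (y + -((j : ℚ_[p]) * (p : ℚ_[p]) ^ (-(n + 1))))
          + -(y + -((i : ℚ_[p]) * (p : ℚ_[p]) ^ (-(n + 1)))) := by ring
    rw [heq2]
    calc ‖_ + _‖ ≤ max ‖y + -((j : ℚ_[p]) * (p : ℚ_[p]) ^ (-(n + 1)))‖
          ‖-(y + -((i : ℚ_[p]) * (p : ℚ_[p]) ^ (-(n + 1))))‖ := Padic.nonarchimedean _ _
      _ ≤ (p : ℝ) ^ n := by rw [norm_neg]; exact max_le hj hi
  rw [norm_mul, Padic.norm_p_zpow, neg_neg] at hd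
  have hd2 : ‖(i : ℚ_[p]) - (j : ℚ_[p])‖ ≤ (p : ℝ) ^ (-(1:ℤ)) := by
    have hpow : (0:ℝ) < (p : ℝ) ^ (n + 1) := by positivity
    rw [show (p:ℝ) ^ (-(1:ℤ)) = (p:ℝ) ^ n / (p:ℝ) ^ (n+1) from by
      rw [eq_div_iff hpow.ne', ← zpow_add₀ (by positivity : (p:ℝ) ≠ 0),
        show -(1:ℤ) + (n+1) = n from by ring],
      le_div_iff₀ hpow]
    exact hd
  have hlt1 : ‖((((i : ℕ) : ℤ) - ((j : ℕ) : ℤ) : ℤ) : ℚ_[p])‖ < 1 := by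
    have hcast : ((((i : ℕ) : ℤ) - ((j : ℕ) : ℤ) : ℤ) : ℚ_[p]) = (i : ℚ_[p]) - (j : ℚ_[p]) := by
      push_cast; ring
    rw [hcast]
    calc ‖(i : ℚ_[p]) - (j : ℚ_[p])‖ ≤ (p : ℝ) ^ (-(1:ℤ)) := hd2
      _ < 1 := by
          rw [zpow_neg, zpow_one]
          rw [inv_lt_one_iff₀]
          right; exact hp1
  rw [Padic.norm_intCast_lt_one_iff] at hlt1
  have hi' : (i : ℕ) < p := i.2
  have hj' : (j : ℕ) < p := j.2
  have : ((i : ℕ) : ℤ) - ((j : ℕ) : ℤ) = 0 := by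
    apply Int.eq_zero_of_abs_lt_dvd hlt1
    rw [abs_lt]
    constructor <;> [nlinarith; nlinarith]
  exact Fin.ext (by omega)

lemma ball_measure_rec (n : ℤ) :
    μ {y : ℚ_[p] | ‖y‖ ≤ (p : ℝ) ^ (n + 1)} = p * μ {y : ℚ_[p] | ‖y‖ ≤ (p : ℝ) ^ n} := by
  rw [ball_succ_eq p n]
  rw [measure_iUnion (ball_succ_disj p n)
    (fun i => (ball_meas p n).preimage (measurable_add_const _))]
  simp only [measure_preimage_add_right]
  rw [tsum_fintype]
  simp [Finset.sum_const, Finset.card_univ]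

lemma ball_measure (hμ : μ {x : ℚ_[p] | ‖x‖ ≤ 1} = 1) (n : ℤ) :
    μ {y : ℚ_[p] | ‖y‖ ≤ (p : ℝ) ^ n} = (p : ENNReal) ^ n := by
  have hp0 : (p : ENNReal) ≠ 0 := by
    exact_mod_cast Nat.cast_ne_zero.2 (Fact.out : p.Prime).ne_zero
  have hptop : (p : ENNReal) ≠ ⊤ := ENNReal.natCast_ne_top p
  have h0 : μ {y : ℚ_[p] | ‖y‖ ≤ (p : ℝ) ^ (0:ℤ)} = 1 := by
    simpa using hμ
  have hpos : ∀ k : ℕ, μ {y : ℚ_[p] | ‖y‖ ≤ (p : ℝ) ^ (k:ℤ)} = (p : ENNReal) ^ (k:ℤ) := by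
    intro k
    induction k with
    | zero => simpa using h0
    | succ k ih =>
        have hrec := ball_measure_rec p μ (k:ℤ)
        rw [ih] at hrec
        rw [show ((k+1:ℕ):ℤ) = (k:ℤ)+1 from by push_cast; ring, hrec,
          ENNReal.zpow_add hp0 hptop, zpow_one, mul_comm]
  have hneg : ∀ k : ℕ, μ {y : ℚ_[p] | ‖y‖ ≤ (p : ℝ) ^ (-(k:ℤ))} = (p : ENNReal) ^ (-(k:ℤ)) := by
    intro k
    induction k with
    | zero => simpa using h0
    | succ k ih =>
        have hrec := ball_measure_rec p μ (-((k:ℤ)+1))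
        rw [show (-((k:ℤ)+1) + 1) = -(k:ℤ) from by ring, ih] at hrec
        have hsolve : μ {y : ℚ_[p] | ‖y‖ ≤ (p : ℝ) ^ (-((k:ℤ)+1))}
            = (p : ENNReal)⁻¹ * (p : ENNReal) ^ (-(k:ℤ)) := by
          rw [hrec, ← mul_assoc, ENNReal.inv_mul_cancel hp0 hptop, one_mul]
        rw [show (-((k+1:ℕ):ℤ)) = -((k:ℤ)+1) from by push_cast; ring, hsolve,
          show (-((k:ℤ)+1)) = -(k:ℤ) + (-1) from by ring,
          ENNReal.zpow_add hp0 hptop, mul_comm]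
        congr 1
        rw [ENNReal.zpow_neg _ 1, zpow_one]
  rcases Int.eq_nat_or_neg n with ⟨k, rfl | rfl⟩
  · exact hpos k
  · exact hneg k

lemma sphere_eq (j : ℤ) :
    {y : ℚ_[p] | ‖y‖ = (p : ℝ) ^ j} =
      {y : ℚ_[p] | ‖y‖ ≤ (p : ℝ) ^ j} \ {y : ℚ_[p] | ‖y‖ ≤ (p : ℝ) ^ (j - 1)} := by
  have hp1 : 1 < (p : ℝ) := by exact_mod_cast (Fact.out : p.Prime).one_lt
  ext y
  simp only [Set.mem_setOf_eq, Set.mem_diff, not_le]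
  constructor
  · intro h
    exact ⟨le_of_eq h, by rw [h]; exact zpow_lt_zpow_right₀ hp1 (by omega)⟩
  · rintro ⟨h1, h2⟩
    have hy0 : y ≠ 0 := by
      intro h; rw [h, norm_zero] at h2; exact absurd h2 (not_lt.2 (zpow_nonneg (by positivity) _))
    rw [Padic.norm_eq_zpow_neg_valuation hy0] at h1 h2 ⊢
    congr 1
    have hv1 : -y.valuation ≤ j := (zpow_le_zpow_iff_right₀ hp1).1 h1
    have hv2 : j - 1 < -y.valuation := (zpow_lt_zpow_iff_right₀ hp1).1 h2
    omega

lemma sphere_measure (hμ : μ {x : ℚ_[p] | ‖x‖ ≤ 1} = 1) (j : ℤ) :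
    μ {y : ℚ_[p] | ‖y‖ = (p : ℝ) ^ j}
      = ENNReal.ofReal ((p : ℝ) ^ j - (p : ℝ) ^ (j - 1)) := by
  have hp1 : 1 < (p : ℝ) := by exact_mod_cast (Fact.out : p.Prime).one_lt
  have hfin : μ {y : ℚ_[p] | ‖y‖ ≤ (p : ℝ) ^ (j - 1)} ≠ ⊤ := by
    rw [ball_measure p μ hμ]
    exact (ENNReal.zpow_lt_top
      (by exact_mod_cast Nat.cast_ne_zero.2 (Fact.out : p.Prime).ne_zero)
      (ENNReal.natCast_ne_top p) _).ne
  have hsub : {y : ℚ_[p] | ‖y‖ ≤ (p : ℝ) ^ (j-1)} ⊆ {y : ℚ_[p] | ‖y‖ ≤ (p : ℝ) ^ j} :=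
    fun y hy => le_trans hy (zpow_le_zpow_right₀ (le_of_lt hp1) (by omega))
  rw [sphere_eq p j, measure_diff hsub (ball_meas p (j-1)).nullMeasurableSet hfin,
    ball_measure p μ hμ, ball_measure p μ hμ]
  have hcast : ∀ m : ℤ, (p : ENNReal) ^ m = ENNReal.ofReal ((p : ℝ) ^ m) := by
    intro m
    have h0 : (p : NNReal) ≠ 0 := by
      exact_mod_cast Nat.cast_ne_zero.2 (Fact.out : p.Prime).ne_zero
    rw [show ((p : ENNReal)) = ((p : NNReal) : ENNReal) from by norm_cast,
      ← ENNReal.coe_zpow h0,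
      show ((p : ℝ) ^ m) = ((((p : NNReal) ^ m : NNReal)) : ℝ) from by push_cast; ring,
      ENNReal.ofReal_coe_nnreal]
  rw [hcast, hcast, ← ENNReal.ofReal_sub _ (by positivity)]

lemma zero_measure (hμ : μ {x : ℚ_[p] | ‖x‖ ≤ 1} = 1) : μ ({0} : Set ℚ_[p]) = 0 := by
  have hp0 : (p : ENNReal) ≠ 0 := by
    exact_mod_cast Nat.cast_ne_zero.2 (Fact.out : p.Prime).ne_zero
  have hptop : (p : ENNReal) ≠ ⊤ := ENNReal.natCast_ne_top p
  have hle : ∀ k : ℕ, μ ({0} : Set ℚ_[p]) ≤ ((p : ENNReal)⁻¹) ^ k := by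
    intro k
    have h1 : μ ({0} : Set ℚ_[p]) ≤ μ {y : ℚ_[p] | ‖y‖ ≤ (p : ℝ) ^ (-(k:ℤ))} := by
      apply measure_mono
      intro y hy
      simp only [Set.mem_singleton_iff] at hy
      simp only [hy, Set.mem_setOf_eq, norm_zero]
      positivity
    rw [ball_measure p μ hμ, ENNReal.zpow_neg, zpow_natCast,
      ENNReal.inv_pow] at h1
    exact h1
  have htend : Filter.Tendsto (fun k : ℕ => ((p : ENNReal)⁻¹) ^ k)
      Filter.atTop (nhds 0) := by
    apply ENNReal.tendsto_pow_atTop_nhds_zero_of_lt_one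
    rw [ENNReal.inv_lt_one]
    exact_mod_cast Nat.one_lt_cast.2 (Fact.out : p.Prime).one_lt
  exact le_antisymm (ge_of_tendsto' htend hle) zero_le

end

theorem kernel_moment_integral
    (p : ℕ) [Fact p.Prime]
    [MeasurableSpace ℚ_[p]] [BorelSpace ℚ_[p]]
    (μ : Measure ℚ_[p]) [μ.IsAddHaarMeasure]
    (hμ : μ {x : ℚ_[p] | ‖x‖ ≤ 1} = 1)
    (α : ℝ) (hα : 0 < α) (hα1 : α ≠ 1) :
    ∃ A : ℝ, 0 < A ∧ ∀ m : ℕ,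
      0 ≤ (1 - (p : ℝ)⁻¹) *
          |(p : ℝ) ^ (-α * m - 1) / (1 - (p : ℝ) ^ (-α * m - 1)) -
            (p : ℝ) ^ (-α * (m + 1)) / (1 - (p : ℝ) ^ (-α * (m + 1)))| ∧
      (1 - (p : ℝ)⁻¹) *
          |(p : ℝ) ^ (-α * m - 1) / (1 - (p : ℝ) ^ (-α * m - 1)) -
            (p : ℝ) ^ (-α * (m + 1)) / (1 - (p : ℝ) ^ (-α * (m + 1)))|
        ≤ A * (p : ℝ) ^ (-α * m) ∧
      ∀ x : ℚ_[p], x ≠ 0 →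
        ∫ y in {y : ℚ_[p] | ‖y‖ < ‖x‖},
            |‖x‖ ^ (α - 1) - ‖y‖ ^ (α - 1)| * ‖y‖ ^ (α * m) ∂μ
          = (1 - (p : ℝ)⁻¹) *
              |(p : ℝ) ^ (-α * m - 1) / (1 - (p : ℝ) ^ (-α * m - 1)) -
                (p : ℝ) ^ (-α * (m + 1)) / (1 - (p : ℝ) ^ (-α * (m + 1)))| *
              ‖x‖ ^ (α * (m + 1)) := by
  have hp1R : 1 < (p : ℝ) := by exact_mod_cast (Fact.out : p.Prime).one_lt
  have hp0R : (0:ℝ) < p := lt_trans one_pos hp1R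
  have hpinv1 : (p : ℝ)⁻¹ < 1 := by rw [inv_lt_one_iff₀]; right; exact hp1R
  have hpinv0 : (0:ℝ) < (p : ℝ)⁻¹ := by positivity
  have hpa1 : (p : ℝ) ^ (-α) < 1 :=
    Real.rpow_lt_one_of_one_lt_of_neg hp1R (by linarith)
  have hpa0 : (0:ℝ) < (p : ℝ) ^ (-α) := Real.rpow_pos_of_pos hp0R _
  refine ⟨(p:ℝ)⁻¹ / (1 - (p:ℝ)⁻¹) + (p:ℝ) ^ (-α) / (1 - (p:ℝ) ^ (-α)),
    add_pos (div_pos hpinv0 (by linarith)) (div_pos hpa0 (by linarith)),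
    fun m => ?_⟩
  set r₁ : ℝ := (p : ℝ) ^ (-α * m - 1) with hr₁
  set r₂ : ℝ := (p : ℝ) ^ (-α * (m + 1)) with hr₂
  have hr₁0 : 0 < r₁ := Real.rpow_pos_of_pos hp0R _
  have hr₂0 : 0 < r₂ := Real.rpow_pos_of_pos hp0R _
  have hm0 : (0:ℝ) ≤ (m:ℝ) := Nat.cast_nonneg m
  have hr₁le : r₁ ≤ (p : ℝ)⁻¹ := by
    rw [hr₁, ← Real.rpow_neg_one (p:ℝ)]
    exact Real.rpow_le_rpow_of_exponent_le hp1R.le (by nlinarith)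
  have hr₂le : r₂ ≤ (p : ℝ) ^ (-α) := by
    rw [hr₂]
    exact Real.rpow_le_rpow_of_exponent_le hp1R.le (by nlinarith)
  have hr₁1 : r₁ < 1 := lt_of_le_of_lt hr₁le hpinv1
  have hr₂1 : r₂ < 1 := lt_of_le_of_lt hr₂le hpa1
  have hd1 : (0:ℝ) < 1 - r₁ := by linarith
  have hd2 : (0:ℝ) < 1 - r₂ := by linarith
  refine ⟨mul_nonneg (by linarith) (abs_nonneg _), ?_, ?_⟩
  · -- upper bound
    have hD1 : r₁ / (1 - r₁) ≤ (p:ℝ) ^ (-α * m) * ((p:ℝ)⁻¹ / (1 - (p:ℝ)⁻¹)) := by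
      have h1 : r₁ / (1 - r₁) ≤ r₁ / (1 - (p:ℝ)⁻¹) :=
        div_le_div_of_nonneg_left hr₁0.le (by linarith) (by linarith)
      have h2 : r₁ = (p:ℝ) ^ (-α * m) * (p:ℝ)⁻¹ := by
        rw [hr₁, show -α * (m:ℝ) - 1 = -α * m + (-1) from by ring,
          Real.rpow_add hp0R, Real.rpow_neg_one]
      calc r₁ / (1 - r₁) ≤ r₁ / (1 - (p:ℝ)⁻¹) := h1
        _ = (p:ℝ) ^ (-α * m) * ((p:ℝ)⁻¹ / (1 - (p:ℝ)⁻¹)) := by rw [h2]; ring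
    have hD2 : r₂ / (1 - r₂) ≤ (p:ℝ) ^ (-α * m) * ((p:ℝ) ^ (-α) / (1 - (p:ℝ) ^ (-α))) := by
      have h1 : r₂ / (1 - r₂) ≤ r₂ / (1 - (p:ℝ) ^ (-α)) :=
        div_le_div_of_nonneg_left hr₂0.le (by linarith) (by linarith)
      have h2 : r₂ = (p:ℝ) ^ (-α * m) * (p:ℝ) ^ (-α) := by
        rw [hr₂, show -α * ((m:ℝ) + 1) = -α * m + (-α) from by ring, Real.rpow_add hp0R]
      calc r₂ / (1 - r₂) ≤ r₂ / (1 - (p:ℝ) ^ (-α)) := h1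
        _ = (p:ℝ) ^ (-α * m) * ((p:ℝ) ^ (-α) / (1 - (p:ℝ) ^ (-α))) := by rw [h2]; ring
    have habs : |r₁ / (1 - r₁) - r₂ / (1 - r₂)| ≤ r₁ / (1 - r₁) + r₂ / (1 - r₂) := by
      refine (abs_sub _ _).trans ?_
      rw [abs_of_nonneg (by positivity), abs_of_nonneg (by positivity)]
    calc (1 - (p : ℝ)⁻¹) * |r₁ / (1 - r₁) - r₂ / (1 - r₂)|
        ≤ 1 * |r₁ / (1 - r₁) - r₂ / (1 - r₂)| := by
          apply mul_le_mul_of_nonneg_right (by linarith) (abs_nonneg _)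
      _ = |r₁ / (1 - r₁) - r₂ / (1 - r₂)| := one_mul _
      _ ≤ r₁ / (1 - r₁) + r₂ / (1 - r₂) := habs
      _ ≤ (p:ℝ) ^ (-α * m) * ((p:ℝ)⁻¹ / (1 - (p:ℝ)⁻¹))
            + (p:ℝ) ^ (-α * m) * ((p:ℝ) ^ (-α) / (1 - (p:ℝ) ^ (-α))) := add_le_add hD1 hD2
      _ = ((p:ℝ)⁻¹ / (1 - (p:ℝ)⁻¹) + (p:ℝ) ^ (-α) / (1 - (p:ℝ) ^ (-α)))
            * (p:ℝ) ^ (-α * m) := by ring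
  · -- main integral
    intro x hx0
    set n : ℤ := -x.valuation with hn
    have hxn : ‖x‖ = (p:ℝ) ^ n := Padic.norm_eq_zpow_neg_valuation hx0
    set S : ℕ → Set ℚ_[p] := fun k => {y : ℚ_[p] | ‖y‖ = (p:ℝ) ^ (n - 1 - (k:ℤ))} with hS
    have hSm : ∀ k, MeasurableSet (S k) := fun k =>
      (isClosed_eq continuous_norm continuous_const).measurableSet
    have hSd : Pairwise (Function.onFun Disjoint S) := by
      intro i j hij
      rw [Function.onFun, Set.disjoint_left]
      intro y hyi hyj
      simp only [hS, Set.mem_setOf_eq] at hyi hyj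
      apply hij
      have := hyi.symm.trans hyj
      have h1 : n - 1 - (i:ℤ) ≤ n - 1 - (j:ℤ) := (zpow_le_zpow_iff_right₀ hp1R).1 this.le
      have h2 : n - 1 - (j:ℤ) ≤ n - 1 - (i:ℤ) := (zpow_le_zpow_iff_right₀ hp1R).1 this.ge
      omega
    have hUsub : (⋃ k, S k) ⊆ {y : ℚ_[p] | ‖y‖ < ‖x‖} := by
      intro y hy
      rcases Set.mem_iUnion.1 hy with ⟨k, hk⟩
      simp only [hS, Set.mem_setOf_eq] at hk ⊢
      rw [hk, hxn]
      exact zpow_lt_zpow_right₀ hp1R (by omega)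
    have hUdiff : {y : ℚ_[p] | ‖y‖ < ‖x‖} \ (⋃ k, S k) ⊆ ({0} : Set ℚ_[p]) := by
      rintro y ⟨hy1, hy2⟩
      simp only [Set.mem_setOf_eq] at hy1
      by_contra hy0
      simp only [Set.mem_singleton_iff] at hy0
      apply hy2
      have hyv : ‖y‖ = (p:ℝ) ^ (-y.valuation) := Padic.norm_eq_zpow_neg_valuation hy0
      rw [hyv, hxn] at hy1
      have hlt : -y.valuation < n := (zpow_lt_zpow_iff_right₀ hp1R).1 hy1
      refine Set.mem_iUnion.2 ⟨(n - 1 - (-y.valuation)).toNat, ?_⟩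
      simp only [hS, Set.mem_setOf_eq]
      rw [hyv]
      congr 1
      rw [Int.toNat_of_nonneg (by omega)]
      ring
    have hUae : {y : ℚ_[p] | ‖y‖ < ‖x‖} =ᵐ[μ] (⋃ k, S k) := by
      rw [MeasureTheory.ae_eq_set]
      constructor
      · exact measure_mono_null hUdiff (zero_measure p μ hμ)
      · rw [Set.diff_eq_empty.2 hUsub]; exact measure_empty
    have hfmeas : Measurable (fun y : ℚ_[p] =>
        |‖x‖ ^ (α - 1) - ‖y‖ ^ (α - 1)| * ‖y‖ ^ (α * m)) := by
      fun_prop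
    have hfnn : ∀ y : ℚ_[p], 0 ≤ |‖x‖ ^ (α - 1) - ‖y‖ ^ (α - 1)| * ‖y‖ ^ (α * m) :=
      fun y => mul_nonneg (abs_nonneg _) (Real.rpow_nonneg (norm_nonneg y) _)
    rw [integral_eq_lintegral_of_nonneg_ae (ae_of_all _ hfnn) hfmeas.aestronglyMeasurable,
      setLIntegral_congr hUae, lintegral_iUnion hSm hSd]
    -- value of each sphere integral
    set T : ℕ → ℝ := fun k =>
      (|‖x‖ ^ (α - 1) - ((p:ℝ) ^ (n - 1 - (k:ℤ))) ^ (α - 1)|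
        * ((p:ℝ) ^ (n - 1 - (k:ℤ))) ^ (α * m))
        * ((p:ℝ) ^ (n - 1 - (k:ℤ)) - (p:ℝ) ^ (n - 1 - (k:ℤ) - 1)) with hT
    have hterm : ∀ k : ℕ, (∫⁻ y in S k,
        ENNReal.ofReal (|‖x‖ ^ (α - 1) - ‖y‖ ^ (α - 1)| * ‖y‖ ^ (α * m)) ∂μ)
        = ENNReal.ofReal (T k) := by
      intro k
      have hconst : ∀ᵐ (y : ℚ_[p]) ∂μ, y ∈ S k →
          ENNReal.ofReal (|‖x‖ ^ (α - 1) - ‖y‖ ^ (α - 1)| * ‖y‖ ^ (α * m))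
          = ENNReal.ofReal (|‖x‖ ^ (α - 1) - ((p:ℝ) ^ (n - 1 - (k:ℤ))) ^ (α - 1)|
              * ((p:ℝ) ^ (n - 1 - (k:ℤ))) ^ (α * m)) := by
        apply ae_of_all
        intro y hy
        simp only [hS, Set.mem_setOf_eq] at hy
        rw [hy]
      have hcnn : (0:ℝ) ≤ |‖x‖ ^ (α - 1) - ((p:ℝ) ^ (n - 1 - (k:ℤ))) ^ (α - 1)|
          * ((p:ℝ) ^ (n - 1 - (k:ℤ))) ^ (α * m) :=
        mul_nonneg (abs_nonneg _) (Real.rpow_nonneg (by positivity) _)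
      rw [setLIntegral_congr_fun_ae (hSm k) hconst,
        setLIntegral_const, sphere_measure p μ hμ (n - 1 - (k:ℤ)),
        ← ENNReal.ofReal_mul hcnn]
    simp only [hterm]
    -- rewrite T via term_eq
    have hcast : ∀ k : ℕ, ((n - 1 - (k:ℤ) : ℤ) : ℝ) = (n:ℝ) - 1 - (k:ℝ) := by
      intro k; push_cast; ring
    have hTk : ∀ k : ℕ, T k =
        ((1 - (p:ℝ)⁻¹) * (((p:ℝ) ^ ((n:ℤ):ℝ)) ^ (α * (m + 1))))
          * |r₁ ^ (k + 1) - r₂ ^ (k + 1)| := by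
      intro k
      have := term_eq hp1R α m k ((n:ℝ))
      rw [hT]
      simp only [hxn]
      rw [show ((p:ℝ) ^ (n:ℤ)) = (p:ℝ) ^ ((n:ℤ):ℝ) from (Real.rpow_intCast _ _).symm,
        show ((p:ℝ) ^ (n - 1 - (k:ℤ))) = (p:ℝ) ^ ((n:ℝ) - 1 - (k:ℝ)) from by
          rw [← hcast k, Real.rpow_intCast],
        show ((p:ℝ) ^ (n - 1 - (k:ℤ) - 1)) = (p:ℝ) ^ ((n:ℝ) - 2 - (k:ℝ)) from by
          rw [show (n - 1 - (k:ℤ) - 1 : ℤ) = n - 2 - (k:ℤ) from by ring, ← Real.rpow_intCast]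
          push_cast; ring_nf]
      rw [hr₁, hr₂]
      exact this
    have hgeo := geom_abs_tsum hr₁0.le hr₁1 hr₂0.le hr₂1
    have hsum : Summable (fun k : ℕ => T k) := by
      have := (geom_abs_summable hr₁0.le hr₁1 hr₂0.le hr₂1).mul_left
        ((1 - (p:ℝ)⁻¹) * (((p:ℝ) ^ ((n:ℤ):ℝ)) ^ (α * (m + 1))))
      apply this.congr
      intro k
      rw [hTk k]
    have hTnn : ∀ k : ℕ, 0 ≤ T k := by
      intro k
      rw [hTk k]
      have h1 : (0:ℝ) ≤ 1 - (p:ℝ)⁻¹ := by linarith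
      positivity
    rw [← ENNReal.ofReal_tsum_of_nonneg hTnn hsum, ENNReal.toReal_ofReal
      (tsum_nonneg hTnn)]
    calc ∑' k, T k
        = ∑' k, ((1 - (p:ℝ)⁻¹) * (((p:ℝ) ^ ((n:ℤ):ℝ)) ^ (α * (m + 1))))
            * |r₁ ^ (k + 1) - r₂ ^ (k + 1)| := by
          exact tsum_congr hTk
      _ = ((1 - (p:ℝ)⁻¹) * (((p:ℝ) ^ ((n:ℤ):ℝ)) ^ (α * (m + 1))))
            * ∑' k : ℕ, |r₁ ^ (k + 1) - r₂ ^ (k + 1)| := tsum_mul_left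
      _ = ((1 - (p:ℝ)⁻¹) * (((p:ℝ) ^ ((n:ℤ):ℝ)) ^ (α * (m + 1))))
            * |r₁ / (1 - r₁) - r₂ / (1 - r₂)| := by rw [hgeo]
      _ = (1 - (p:ℝ)⁻¹) * |r₁ / (1 - r₁) - r₂ / (1 - r₂)| * ‖x‖ ^ (α * (m + 1)) := by
          rw [hxn, show ((p:ℝ) ^ (n:ℤ)) = (p:ℝ) ^ ((n:ℤ):ℝ) from
            (Real.rpow_intCast _ _).symm]
          ring
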